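/- Let H be a complex inner product space, and let F and U be unitary operators on H with F ∘ U = exp(2πi·p̃/q̃) · (U ∘ F), where p̃ and q̃ are coprime integers with q̃ ≥ 1. Let G be a subspace of H with F(G) ⊆ G, and suppose some nonzero ψ ∈ G satisfies Uψ = μψ for a complex number μ. Then the q̃ vectors ψ, Fψ, F²ψ, …, F^{q̃−1}ψ all lie in G, are nonzero, and are pairwise orthogonal; consequently, if G is finite dimensional, dim G ≥ q̃. -/

import Mathlib

/-- Tao–Wu degeneracy: let `F`, `U` be unitaries with
`F ∘ U = exp(2πi·p̃/q̃)·(U ∘ F)` for coprime integers `p̃`, `q̃` with `q̃ ≥ 1`, let `G` be an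
`F`-invariant subspace, and let `ψ ∈ G` be a nonzero `U`-eigenvector. Then the `q̃` vectors
`ψ, Fψ, …, F^{q̃−1}ψ` lie in `G`, are nonzero and pairwise orthogonal; hence if `G` is
finite dimensional, `dim G ≥ q̃`. -/
theorem tao_wu_ground_state_degeneracy
    {H : Type*} [NormedAddCommGroup H] [InnerProductSpace ℂ H]
    (F U : H ≃ₗᵢ[ℂ] H) (p : ℤ) (q : ℕ) (hq : 1 ≤ q) (hcop : Int.gcd p (q : ℤ) = 1)
    (hFU : ∀ x : H, F (U x) =
      Complex.exp (2 * Real.pi * Complex.I * ((p : ℂ) / (q : ℂ))) • U (F x))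
    (G : Submodule ℂ H) (hFG : ∀ x ∈ G, F x ∈ G)
    (ψ : H) (hψG : ψ ∈ G) (hψ : ψ ≠ 0) (μ : ℂ) (hUψ : U ψ = μ • ψ) :
    (∀ m : ℕ, m < q → (F ^ m) ψ ∈ G ∧ (F ^ m) ψ ≠ 0) ∧
    (∀ m n : ℕ, m < n → n < q → (inner ℂ ((F ^ m) ψ) ((F ^ n) ψ) : ℂ) = 0) ∧
    (FiniteDimensional ℂ G → q ≤ Module.finrank ℂ G) := by
  set ω : ℂ := Complex.exp (2 * Real.pi * Complex.I * ((p : ℂ) / (q : ℂ))) with hωdef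
  have hqC : (q : ℂ) ≠ 0 := by
    exact_mod_cast Nat.cast_ne_zero.mpr (by omega)
  have hωne : ω ≠ 0 := Complex.exp_ne_zero _
  -- powers of F applied to ψ
  have hsucc : ∀ (n : ℕ) (x : H), (F ^ (n + 1)) x = F ((F ^ n) x) := by
    intro n x
    rw [pow_succ']
    rfl
  -- membership
  have hmem : ∀ m : ℕ, (F ^ m) ψ ∈ G := by
    intro m
    induction m with
    | zero => simpa using hψG
    | succ n ih => rw [hsucc]; exact hFG _ ih
  -- norms
  have hnorm : ∀ m : ℕ, ‖(F ^ m) ψ‖ = ‖ψ‖ := fun m => (F ^ m).norm_map ψ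
  have hne : ∀ m : ℕ, (F ^ m) ψ ≠ 0 := by
    intro m h
    apply hψ
    have := hnorm m
    rw [h, norm_zero] at this
    exact norm_eq_zero.mp this.symm
  -- commutation relation rearranged
  have hUF : ∀ x : H, U (F x) = ω⁻¹ • F (U x) := by
    intro x
    rw [hFU x, smul_smul, inv_mul_cancel₀ hωne, one_smul]
  -- eigenvalue relation
  have heig : ∀ m : ℕ, U ((F ^ m) ψ) = (ω⁻¹ ^ m * μ) • (F ^ m) ψ := by
    intro m
    induction m with
    | zero => simpa using hUψ
    | succ n ih =>
      rw [hsucc, hUF, ih, map_smul, smul_smul]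
      congr 1
      ring
  -- eigenvalues have modulus one
  have habs : ∀ m : ℕ, ‖ω⁻¹ ^ m * μ‖ = 1 := by
    intro m
    have h2 : ‖(F ^ m) ψ‖ ≠ 0 := norm_ne_zero_iff.mpr (hne m)
    have h1 : ‖ω⁻¹ ^ m * μ‖ * ‖(F ^ m) ψ‖ = ‖(F ^ m) ψ‖ := by
      rw [← norm_smul, ← heig m, U.norm_map]
    exact mul_right_cancel₀ h2 (h1.trans (one_mul _).symm)
  have hμne : μ ≠ 0 := by
    intro h
    have := habs 0
    simp [h] at this
  -- ω^k ≠ 1 for 0 < k < q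
  have hωpow : ∀ k : ℕ, 0 < k → k < q → ω ^ k ≠ 1 := by
    intro k hk0 hkq h1
    rw [hωdef, ← Complex.exp_nat_mul] at h1
    obtain ⟨n, hn⟩ := Complex.exp_eq_one_iff.mp h1
    have h2 : (k : ℂ) * ((p : ℂ) / (q : ℂ)) = (n : ℂ) := by
      have h2pi : (2 : ℂ) * Real.pi * Complex.I ≠ 0 := by
        simp [Real.pi_ne_zero, Complex.I_ne_zero]
      field_simp at hn ⊢
      have : (k : ℂ) * ((2 : ℂ) * Real.pi * Complex.I * (p : ℂ)) =
          (n : ℂ) * ((2 : ℂ) * Real.pi * Complex.I) * (q : ℂ) := by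
        linear_combination (2 * (Real.pi : ℂ) * Complex.I) * hn
      have h3 : ((2 : ℂ) * Real.pi * Complex.I) * ((k : ℂ) * (p : ℂ)) =
          ((2 : ℂ) * Real.pi * Complex.I) * ((n : ℂ) * (q : ℂ)) := by
        linear_combination this
      have := mul_left_cancel₀ h2pi h3
      linear_combination this
    have h4 : (k : ℂ) * (p : ℂ) = (n : ℂ) * (q : ℂ) := by
      field_simp at h2
      linear_combination h2
    have h5 : (k : ℤ) * p = n * (q : ℤ) := by
      exact_mod_cast h4
    have hdvd : (q : ℤ) ∣ (k : ℤ) * p := ⟨n, by linarith⟩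
    have hcop' : IsCoprime (q : ℤ) p := by
      rw [Int.isCoprime_iff_gcd_eq_one, Int.gcd_comm]
      exact hcop
    have hdvdk : (q : ℤ) ∣ (k : ℤ) := hcop'.dvd_of_dvd_mul_right hdvd
    have : q ∣ k := by exact_mod_cast hdvdk
    exact absurd (Nat.le_of_dvd hk0 this) (by omega)
  -- pairwise orthogonality
  have horth : ∀ m n : ℕ, m < n → n < q →
      (inner ℂ ((F ^ m) ψ) ((F ^ n) ψ) : ℂ) = 0 := by
    intro m n hmn hnq
    by_contra hinner
    set a : ℂ := ω⁻¹ ^ m * μ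
    set b : ℂ := ω⁻¹ ^ n * μ
    have key : (inner ℂ (U ((F ^ m) ψ)) (U ((F ^ n) ψ)) : ℂ) =
        inner ℂ ((F ^ m) ψ) ((F ^ n) ψ) := U.inner_map_map _ _
    rw [heig m, heig n, inner_smul_left, inner_smul_right] at key
    have hone : (starRingEnd ℂ) a * b = 1 := by
      have key2 : ((starRingEnd ℂ) a * b) * (inner ℂ ((F ^ m) ψ) ((F ^ n) ψ) : ℂ) =
          1 * (inner ℂ ((F ^ m) ψ) ((F ^ n) ψ) : ℂ) := by
        rw [one_mul, mul_assoc]; exact key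
      exact mul_right_cancel₀ hinner key2
    have haa : (starRingEnd ℂ) a * a = 1 := by
      rw [mul_comm, Complex.mul_conj, Complex.normSq_eq_norm_sq]
      have := habs m
      rw [this]
      norm_num
    have hab : a = b := by
      have hca : (starRingEnd ℂ) a ≠ 0 := by
        intro h
        rw [h, zero_mul] at hone
        exact zero_ne_one hone
      exact mul_left_cancel₀ hca (haa.trans hone.symm)
    -- derive contradiction: ω^(n-m) = 1
    have hωinv : ω⁻¹ ^ m = ω⁻¹ ^ n := by
      have := hab
      simp only [a, b] at this
      exact mul_right_cancel₀ hμne this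
    have hωmn : ω ^ n = ω ^ m := by
      have := congrArg (fun z => z⁻¹) hωinv
      simp only [← inv_pow, inv_inv] at this
      exact this.symm
    have : ω ^ (n - m) = 1 := by
      have hpow : ω ^ m * ω ^ (n - m) = ω ^ m * 1 := by
        rw [← pow_add, mul_one]
        rw [Nat.add_sub_cancel' (le_of_lt hmn)]
        exact hωmn
      exact mul_left_cancel₀ (pow_ne_zero m hωne) hpow
    exact hωpow (n - m) (by omega) (by omega) this
  refine ⟨fun m _ => ⟨hmem m, hne m⟩, horth, ?_⟩
  -- dimension bound
  intro hfd
  have hψn : ‖ψ‖ ≠ 0 := norm_ne_zero_iff.mpr hψ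
  set v : Fin q → G := fun i => ⟨(‖ψ‖ : ℂ)⁻¹ • (F ^ (i : ℕ)) ψ,
    G.smul_mem _ (hmem _)⟩ with hv
  have hortho : Orthonormal ℂ v := by
    rw [orthonormal_iff_ite]
    intro i j
    by_cases hij : i = j
    · subst hij
      simp only [if_pos rfl]
      have hn1 : ‖v i‖ = 1 := by
        show ‖(‖ψ‖ : ℂ)⁻¹ • (F ^ (i : ℕ)) ψ‖ = 1
        rw [norm_smul, hnorm]
        simp [hψn]
      rw [inner_self_eq_norm_sq_to_K, hn1]
      norm_num
    · simp only [if_neg hij]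
      have hinner : ∀ i j : Fin q, (i : ℕ) < (j : ℕ) →
          (inner ℂ (v i) (v j) : ℂ) = 0 := by
        intro i j h
        have : (inner ℂ (v i : H) (v j : H) : ℂ) = 0 := by
          simp only [hv, inner_smul_left, inner_smul_right]
          rw [horth _ _ h j.isLt]
          simp
        exact this
      rcases lt_or_gt_of_ne (fun h => hij (Fin.ext h) : (i : ℕ) ≠ (j : ℕ)) with h | h
      · exact hinner i j h
      · have := hinner j i h
        rw [← inner_conj_symm, this, map_zero]
  have hli := hortho.linearIndependent
  have := hli.fintype_card_le_finrank
  simpa using this
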